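/- Define g₀ : 𝒢 → ℂ by g₀((0,y)) = 1 and g₀((1,y)) = −1 for all y ∈ Y, and g₀ = 0 on X ⊔ (G × Z) ⊔ (G × {ε}). Then: (i) g₀ is singular, i.e. its support (ℤ/2ℤ) × Y has empty interior in 𝒢; (ii) every f ∈ A(𝒢) with sup_{γ∈𝒢} |f(γ) − g₀(γ)| < 1/2 has support with nonempty interior, hence is not singular. Consequently, g₀ does not lie in the closure, with respect to the supremum norm on functions 𝒢 → ℂ, of the set of singular elements of A(𝒢). -/

import Mathlib

/-- The unit space `𝒢⁰ = X ⊔ Y ⊔ Z ⊔ {ε}`. -/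
inductive U0 : Type
  | x : ℕ → ℕ → U0
  | y : ℕ → U0
  | z : ℕ → U0
  | eps : U0

/-- Basic neighbourhoods `U_{y_i,F} = {y_i} ∪ (X_i \ F)` of `y_i`, where the finite set
`F ⊆ X_i` is recorded by the finite set of second indices `j`. -/
def Uy (i : ℕ) (F : Finset ℕ) : Set U0 :=
  {u | u = U0.y i ∨ ∃ j ∉ F, u = U0.x i j}

/-- Basic neighbourhoods `U_{F_Y,F_Z} = 𝒢⁰ \ (⋃_{y_i ∈ F_Y} U_{y_i,∅} ∪ F_Z)` of `ε`,
where the finite sets `F_Y ⊆ Y`, `F_Z ⊆ Z` are recorded by finite sets of indices. -/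
def UFF (FY FZ : Finset ℕ) : Set U0 :=
  ((⋃ i ∈ FY, Uy i ∅) ∪ (U0.z '' (FZ : Set ℕ)))ᶜ

/-- The topology on the unit space, generated by the basis described above. -/
instance : TopologicalSpace U0 :=
  TopologicalSpace.generateFrom
    ({s | ∃ i j, s = {U0.x i j}} ∪ {s | ∃ i, s = {U0.z i}} ∪
      {s | ∃ i F, s = Uy i F} ∪ {s | ∃ FY FZ, s = UFF FY FZ})

/-- The groupoid `𝒢 = X ⊔ ((ℤ/2) × Y) ⊔ (G × Z) ⊔ (G × {ε})`, as a set,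
where `G = (ℤ/2) × H`. -/
inductive Grpd (H : Type) : Type
  | x : ℕ → ℕ → Grpd H
  | y : ZMod 2 → ℕ → Grpd H
  | z : ZMod 2 × H → ℕ → Grpd H
  | eps : ZMod 2 × H → Grpd H

/-- The section `σ_g : 𝒢⁰ → 𝒢` associated to `g = (n,h) ∈ G`. -/
def sigmaMap {H : Type} (g : ZMod 2 × H) : U0 → Grpd H
  | U0.x i j => Grpd.x i j
  | U0.y i => Grpd.y g.1 i
  | U0.z i => Grpd.z g i
  | U0.eps => Grpd.eps g

/-- The bisection `U_g = σ_g(𝒢⁰)`. -/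
def Ug {H : Type} (g : ZMod 2 × H) : Set (Grpd H) :=
  Set.range (sigmaMap g)

/-- The topology on `𝒢`, generated by the sets `σ_g(U)` for `U ⊆ 𝒢⁰` open. -/
instance (H : Type) : TopologicalSpace (Grpd H) :=
  TopologicalSpace.generateFrom {s | ∃ (g : ZMod 2 × H) (U : Set U0), IsOpen U ∧ s = sigmaMap g '' U}

/-- The algebra `A(𝒢)`: functions of the form `f = ∑_{g ∈ T} f_g`, `T ⊆ G` finite, where each
`f_g` vanishes outside `U_g` and `f_g ∘ σ_g` is continuous. -/
def AG (H : Type) : Set (Grpd H → ℂ) :=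
  {f | ∃ (T : Finset (ZMod 2 × H)) (F : (ZMod 2 × H) → Grpd H → ℂ),
    (∀ g : ZMod 2 × H, ∀ γ ∉ Ug g, F g γ = 0) ∧
    (∀ g : ZMod 2 × H, Continuous (F g ∘ sigmaMap g)) ∧
    f = fun γ => ∑ g ∈ T, F g γ}

/-- A function on `𝒢` is singular if its support has empty interior. -/
def Singular {H : Type} (f : Grpd H → ℂ) : Prop :=
  interior {γ : Grpd H | f γ ≠ 0} = ∅

/-- The function `g₀` taking value `1` at `(0,y)`, `-1` at `(1,y)` (`y ∈ Y`), and `0`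
elsewhere. -/
noncomputable def g0 (H : Type) : Grpd H → ℂ
  | Grpd.y n _ => if n = 0 then 1 else -1
  | _ => 0
section Lemmas

open TopologicalSpace

variable {H : Type}

lemma u0_basic {s : Set U0}
    (hs : s ∈ ({s | ∃ i j, s = {U0.x i j}} ∪ {s | ∃ i, s = {U0.z i}} ∪
      {s | ∃ i F, s = Uy i F} ∪ {s | ∃ FY FZ, s = UFF FY FZ} : Set (Set U0))) :
    IsOpen s :=
  TopologicalSpace.GenerateOpen.basic s hs

lemma eps_mem_UFF (FY FZ : Finset ℕ) : U0.eps ∈ UFF FY FZ := by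
  simp [UFF, Uy]

lemma y_mem_UFF {FY FZ : Finset ℕ} {i : ℕ} : U0.y i ∈ UFF FY FZ ↔ i ∉ FY := by
  simp [UFF, Uy]

lemma z_mem_UFF {FY FZ : Finset ℕ} {i : ℕ} : U0.z i ∈ UFF FY FZ ↔ i ∉ FZ := by
  simp [UFF, Uy]

lemma x_mem_UFF {FY FZ : Finset ℕ} {i j : ℕ} : U0.x i j ∈ UFF FY FZ ↔ i ∉ FY := by
  simp [UFF, Uy]

/-- Every open set containing `ε` contains cofinitely many `y_i` and cofinitely many `z_i`. -/
lemma eps_lemma {U : Set U0} (hU : IsOpen U) :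
    U0.eps ∈ U → {i | U0.y i ∉ U}.Finite ∧ {i | U0.z i ∉ U}.Finite := by
  have h : TopologicalSpace.GenerateOpen
      ({s | ∃ i j, s = {U0.x i j}} ∪ {s | ∃ i, s = {U0.z i}} ∪
        {s | ∃ i F, s = Uy i F} ∪ {s | ∃ FY FZ, s = UFF FY FZ}) U := hU
  clear hU
  induction h with
  | basic s hs =>
      intro he
      rcases hs with ((⟨i,j,rfl⟩|⟨i,rfl⟩)|⟨i,F,rfl⟩)|⟨FY,FZ,rfl⟩
      · simp at he
      · simp at he
      · simp [Uy] at he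
      · constructor
        · exact (FY.finite_toSet).subset (fun i hi => by
            simpa [y_mem_UFF] using hi)
        · exact (FZ.finite_toSet).subset (fun i hi => by
            simpa [z_mem_UFF] using hi)
  | univ => intro _; simp
  | inter s t _ _ ihs iht =>
      intro he
      obtain ⟨hs1, hs2⟩ := ihs he.1
      obtain ⟨ht1, ht2⟩ := iht he.2
      constructor
      · exact (hs1.union ht1).subset (fun i hi => by
          by_cases h : U0.y i ∈ s <;> simp_all)
      · exact (hs2.union ht2).subset (fun i hi => by
          by_cases h : U0.z i ∈ s <;> simp_all)
  | sUnion S _ ih =>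
      rintro ⟨t, ht, het⟩
      obtain ⟨h1, h2⟩ := ih t ht het
      constructor
      · exact h1.subset (fun i hi => fun hc => hi ⟨t, ht, hc⟩)
      · exact h2.subset (fun i hi => fun hc => hi ⟨t, ht, hc⟩)

/-- Every open set containing `y_i` contains cofinitely many `x_{ij}`. -/
lemma y_lemma {U : Set U0} (hU : IsOpen U) (i : ℕ) :
    U0.y i ∈ U → {j | U0.x i j ∉ U}.Finite := by
  have h : TopologicalSpace.GenerateOpen
      ({s | ∃ i j, s = {U0.x i j}} ∪ {s | ∃ i, s = {U0.z i}} ∪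
        {s | ∃ i F, s = Uy i F} ∪ {s | ∃ FY FZ, s = UFF FY FZ}) U := hU
  clear hU
  induction h with
  | basic s hs =>
      intro he
      rcases hs with ((⟨i',j',rfl⟩|⟨i',rfl⟩)|⟨i',F,rfl⟩)|⟨FY,FZ,rfl⟩
      · simp at he
      · simp at he
      · have hii : i = i' := by
          rcases he with h | ⟨j, _, h⟩ <;> simp_all
        subst hii
        exact (F.finite_toSet).subset (fun j hj => by
          simp only [Set.mem_setOf_eq, Uy] at hj
          by_contra hjF
          exact hj (Or.inr ⟨j, hjF, rfl⟩))
      · have : i ∉ FY := y_mem_UFF.mp he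
        have : {j | U0.x i j ∉ UFF FY FZ} = ∅ := by
          ext j; simp [x_mem_UFF, this]
        simp [this]
  | univ => intro _; simp
  | inter s t _ _ ihs iht =>
      intro he
      exact ((ihs he.1).union (iht he.2)).subset (fun j hj => by
        by_cases h : U0.x i j ∈ s <;> simp_all)
  | sUnion S _ ih =>
      rintro ⟨t, ht, het⟩
      exact (ih t ht het).subset (fun j hj => fun hc => hj ⟨t, ht, hc⟩)

end Lemmas
section Lemmas2

variable {H : Type}

lemma y_not_mem_Ug {g : ZMod 2 × H} {n : ZMod 2} {i : ℕ} (h : g.1 ≠ n) :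
    Grpd.y n i ∉ Ug g := by
  rintro ⟨u, hu⟩
  cases u <;> simp [sigmaMap] at hu
  exact h hu.1

lemma z_not_mem_Ug {g g' : ZMod 2 × H} {i : ℕ} (h : g' ≠ g) :
    Grpd.z g' i ∉ Ug g := by
  rintro ⟨u, hu⟩
  cases u <;> simp [sigmaMap] at hu
  exact h hu.1.symm

lemma isOpen_z_singleton (g : ZMod 2 × H) (i : ℕ) : IsOpen {Grpd.z g i} :=
  TopologicalSpace.GenerateOpen.basic _
    ⟨g, {U0.z i}, u0_basic (Or.inl (Or.inl (Or.inr ⟨i, rfl⟩))),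
      by rw [Set.image_singleton]; rfl⟩

/-- Every open set in `𝒢` containing `(n, y_i)` contains cofinitely many `x_{ij}`. -/
lemma grpd_y_lemma {S : Set (Grpd H)} (hS : IsOpen S) (n : ZMod 2) (i : ℕ) :
    Grpd.y n i ∈ S → {j | Grpd.x i j ∉ S}.Finite := by
  have h : TopologicalSpace.GenerateOpen
      {s | ∃ (g : ZMod 2 × H) (U : Set U0), IsOpen U ∧ s = sigmaMap g '' U} S := hS
  clear hS
  induction h with
  | basic s hs =>
      rintro hy
      obtain ⟨g, U, hU, rfl⟩ := hs
      obtain ⟨u, hu, heq⟩ := hy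
      cases u with
      | x i' j' => simp [sigmaMap] at heq
      | z i' => simp [sigmaMap] at heq
      | eps => simp [sigmaMap] at heq
      | y i' =>
          simp only [sigmaMap, Grpd.y.injEq] at heq
          obtain ⟨-, rfl⟩ := heq
          exact (y_lemma hU _ hu).subset (fun j hj hc => hj ⟨_, hc, rfl⟩)
  | univ => intro _; simp
  | inter s t _ _ ihs iht =>
      intro he
      exact ((ihs he.1).union (iht he.2)).subset (fun j hj => by
        by_cases h : Grpd.x i j ∈ s <;> simp_all)
  | sUnion S _ ih =>
      rintro ⟨t, ht, het⟩
      exact (ih t ht het).subset (fun j hj => fun hc => hj ⟨t, ht, hc⟩)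

lemma eps_mem_closure_z : U0.eps ∈ closure {u : U0 | ∃ i, u = U0.z i} := by
  rw [mem_closure_iff]
  intro o ho he
  obtain ⟨-, h2⟩ := eps_lemma ho he
  obtain ⟨i, hi⟩ := h2.infinite_compl.nonempty
  exact ⟨U0.z i, by simpa using hi, i, rfl⟩

lemma eps_mem_closure_y : U0.eps ∈ closure {u : U0 | ∃ i, u = U0.y i} := by
  rw [mem_closure_iff]
  intro o ho he
  obtain ⟨h1, -⟩ := eps_lemma ho he
  obtain ⟨i, hi⟩ := h1.infinite_compl.nonempty
  exact ⟨U0.y i, by simpa using hi, i, rfl⟩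

end Lemmas2

/-- Auxiliary continuous function on the unit space: the "`n = 1` part" of `f` read through
the sections. -/
noncomputable def psi {H : Type} (T : Finset (ZMod 2 × H)) (F : (ZMod 2 × H) → Grpd H → ℂ) :
    U0 → ℂ :=
  fun u => ∑ g ∈ T, if g.1 = 1 then F g (sigmaMap g u) else 0

lemma key_lemma {H : Type} (f : Grpd H → ℂ) (hf : f ∈ AG H) {c : ℝ} (hc : c < 1 / 2)
    (hb : ∀ γ : Grpd H, ‖f γ - g0 H γ‖ ≤ c) :
    (interior {γ : Grpd H | f γ ≠ 0}).Nonempty := by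
  obtain ⟨T, F, hvan, hcont, hfe⟩ := hf
  by_cases hz : ∃ (g : ZMod 2 × H) (i : ℕ), f (Grpd.z g i) ≠ 0
  · obtain ⟨g, i, hne⟩ := hz
    exact ⟨Grpd.z g i, mem_interior.mpr
      ⟨{Grpd.z g i}, Set.singleton_subset_iff.mpr hne, isOpen_z_singleton g i, rfl⟩⟩
  · exfalso
    push_neg at hz
    have hψc : Continuous (psi T F) := by
      apply continuous_finset_sum
      intro g _
      by_cases h : g.1 = 1
      · simp only [h, if_true]
        exact hcont g
      · simp only [h, if_false]
        exact continuous_const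
    have hψy : ∀ i, psi T F (U0.y i) = f (Grpd.y 1 i) := by
      intro i
      rw [hfe]
      apply Finset.sum_congr rfl
      intro g _
      by_cases h : g.1 = 1
      · rw [if_pos h]
        show F g (Grpd.y g.1 i) = F g (Grpd.y 1 i)
        rw [h]
      · rw [if_neg h, hvan g _ (y_not_mem_Ug h)]
    have hψz : ∀ i, psi T F (U0.z i) = 0 := by
      intro i
      apply Finset.sum_eq_zero
      intro g hg
      have hFz : F g (Grpd.z g i) = 0 := by
        have h0 : ∑ g' ∈ T, F g' (Grpd.z g i) = 0 := by
          have h0' := hz g i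
          rw [hfe] at h0'
          exact h0'
        rwa [Finset.sum_eq_single_of_mem g hg
          (fun g' _ hne => hvan g' _ (z_not_mem_Ug hne.symm))] at h0
      by_cases h : g.1 = 1
      · rw [if_pos h]; exact hFz
      · rw [if_neg h]
    have hψeps : psi T F U0.eps = 0 := by
      have hEq : Set.EqOn (psi T F) 0 {u : U0 | ∃ i, u = U0.z i} := by
        rintro u ⟨i, rfl⟩; exact hψz i
      exact hEq.closure hψc continuous_const eps_mem_closure_z
    have hlow : ∀ i, 1 - c ≤ ‖psi T F (U0.y i)‖ := by
      intro i
      rw [hψy i]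
      set a := f (Grpd.y 1 i) with ha
      have h1 : ‖a - g0 H (Grpd.y 1 i)‖ ≤ c := hb _
      have h2 : g0 H (Grpd.y 1 i) = -1 := by
        show (if (1 : ZMod 2) = 0 then (1 : ℂ) else -1) = -1
        norm_num
      rw [h2, sub_neg_eq_add] at h1
      have h4 := norm_add_le (-(a + 1)) a
      have h5 : (-(a + 1) + a) = -1 := by ring
      rw [h5] at h4
      have h6 : ‖-(a + 1)‖ = ‖a + 1‖ := norm_neg (a + 1)
      have h7 : ‖(-1 : ℂ)‖ = 1 := by simp
      rw [h6, h7] at h4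
      linarith
    have hclosed : IsClosed {u : U0 | 1 - c ≤ ‖psi T F u‖} :=
      isClosed_le continuous_const (continuous_norm.comp hψc)
    have heps := (hclosed.closure_subset_iff.mpr
      (fun u hu => by obtain ⟨i, rfl⟩ := hu; exact hlow i)) eps_mem_closure_y
    rw [Set.mem_setOf_eq, hψeps, norm_zero] at heps
    linarith

theorem stmt2 (H : Type) [Group H] :
    ({γ : Grpd H | g0 H γ ≠ 0} = {γ : Grpd H | ∃ (n : ZMod 2) (i : ℕ), γ = Grpd.y n i}) ∧
    Singular (g0 H) ∧
    (∀ f ∈ AG H,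
      (∃ c : ℝ, c < 1 / 2 ∧ ∀ γ : Grpd H, ‖f γ - g0 H γ‖ ≤ c) →
      (interior {γ : Grpd H | f γ ≠ 0}).Nonempty ∧ ¬ Singular f) ∧
    ¬ ∃ fs : ℕ → (Grpd H → ℂ),
        (∀ n, fs n ∈ AG H ∧ Singular (fs n)) ∧
        TendstoUniformly fs (g0 H) Filter.atTop := by
  have hsupp : {γ : Grpd H | g0 H γ ≠ 0} =
      {γ : Grpd H | ∃ (n : ZMod 2) (i : ℕ), γ = Grpd.y n i} := by
    ext γ
    cases γ with
    | x i j => simp [g0]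
    | y n i =>
        simp only [Set.mem_setOf_eq, g0, Grpd.y.injEq]
        constructor
        · intro _; exact ⟨n, i, rfl, rfl⟩
        · intro _
          split_ifs
          · exact one_ne_zero
          · exact neg_ne_zero.mpr one_ne_zero
    | z g i => simp [g0]
    | eps g => simp [g0]
  have hsing : Singular (g0 H) := by
    show interior {γ : Grpd H | g0 H γ ≠ 0} = ∅
    rw [hsupp]
    apply Set.eq_empty_iff_forall_notMem.mpr
    intro γ hγ
    have hγs := interior_subset hγ
    obtain ⟨n, i, rfl⟩ := hγs
    obtain ⟨j, hj⟩ := (grpd_y_lemma isOpen_interior n i hγ).infinite_compl.nonempty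
    have hx : Grpd.x i j ∈ {γ : Grpd H | ∃ (n : ZMod 2) (i : ℕ), γ = Grpd.y n i} :=
      interior_subset (by simpa using hj)
    obtain ⟨n', i', h⟩ := hx
    simp at h
  refine ⟨hsupp, hsing, fun f hf hcb => ?_, ?_⟩
  · obtain ⟨c, hc, hb⟩ := hcb
    have hne := key_lemma f hf hc hb
    exact ⟨hne, fun hs => hne.ne_empty hs⟩
  · rintro ⟨fs, hfs, htend⟩
    rw [Metric.tendstoUniformly_iff] at htend
    obtain ⟨n, hn⟩ := (htend (1/4) (by norm_num)).exists
    have hb : ∀ γ : Grpd H, ‖fs n γ - g0 H γ‖ ≤ 1 / 4 := by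
      intro γ
      have h := hn γ
      rw [← Complex.dist_eq, dist_comm]
      exact h.le
    have hne := key_lemma (fs n) (hfs n).1 (by norm_num : (1:ℝ)/4 < 1/2) hb
    exact hne.ne_empty (hfs n).2
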